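/- Let A and B be bounded linear operators on a complex Hilbert space H, and let T be the operator on H ⊕ H given by the 2×2 operator matrix with zero diagonal entries, (1,2)-entry A, and (2,1)-entry B*. Then ‖A + B‖ ≤ 2 w(T) ≤ ‖A‖ + ‖B‖, where w denotes the numerical radius. -/

import Mathlib

/-- The numerical radius of a bounded linear operator. -/
noncomputable def numRadius {E : Type*} [NormedAddCommGroup E] [InnerProductSpace ℂ E]
    (T : E →L[ℂ] E) : ℝ :=
  ⨆ x : {x : E // ‖x‖ = 1}, ‖(inner ℂ (T x.val) x.val : ℂ)‖

/-- The 2×2 operator matrix `[[0, C],[D, 0]]` acting on `H ⊕ H` (as `WithLp 2 (H × H)`)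
by `(x, y) ↦ (C y, D x)`. -/
noncomputable def offDiagOp {H : Type*} [NormedAddCommGroup H] [InnerProductSpace ℂ H]
    (C D : H →L[ℂ] H) : WithLp 2 (H × H) →L[ℂ] WithLp 2 (H × H) :=
  ((WithLp.prodContinuousLinearEquiv 2 ℂ H H).symm : (H × H) →L[ℂ] WithLp 2 (H × H)) ∘L
    ((C ∘L ContinuousLinearMap.snd ℂ H H).prod (D ∘L ContinuousLinearMap.fst ℂ H H)) ∘L
    ((WithLp.prodContinuousLinearEquiv 2 ℂ H H) : WithLp 2 (H × H) →L[ℂ] (H × H))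

lemma offDiagOp_fst {H : Type*} [NormedAddCommGroup H] [InnerProductSpace ℂ H]
    (C D : H →L[ℂ] H) (z : WithLp 2 (H × H)) : (offDiagOp C D z).fst = C z.snd := rfl

lemma offDiagOp_snd {H : Type*} [NormedAddCommGroup H] [InnerProductSpace ℂ H]
    (C D : H →L[ℂ] H) (z : WithLp 2 (H × H)) : (offDiagOp C D z).snd = D z.fst := rfl

lemma numRadius_bdd {E : Type*} [NormedAddCommGroup E] [InnerProductSpace ℂ E]
    (T : E →L[ℂ] E) :
    BddAbove (Set.range fun x : {x : E // ‖x‖ = 1} => ‖(inner ℂ (T x.val) x.val : ℂ)‖) := by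
  refine ⟨‖T‖, ?_⟩
  rintro r ⟨⟨x, hx⟩, rfl⟩
  calc ‖(inner ℂ (T x) x : ℂ)‖ ≤ ‖T x‖ * ‖x‖ := norm_inner_le_norm _ _
    _ ≤ ‖T‖ * ‖x‖ * ‖x‖ := by gcongr; exact T.le_opNorm x
    _ = ‖T‖ := by rw [hx]; ring

theorem stmt_7 {H : Type*} [NormedAddCommGroup H] [InnerProductSpace ℂ H] [CompleteSpace H]
    (A B : H →L[ℂ] H) (T : WithLp 2 (H × H) →L[ℂ] WithLp 2 (H × H))
    (hT : T = offDiagOp A (ContinuousLinearMap.adjoint B)) :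
    ‖A + B‖ ≤ 2 * numRadius T ∧ 2 * numRadius T ≤ ‖A‖ + ‖B‖ := by
  have hinner : ∀ z : WithLp 2 (H × H),
      (inner ℂ (T z) z : ℂ) = inner ℂ (A z.snd) z.fst + inner ℂ z.fst (B z.snd) := by
    intro z
    rw [hT, WithLp.prod_inner_apply]
    change inner ℂ (offDiagOp A (ContinuousLinearMap.adjoint B) z).fst z.fst +
      inner ℂ (offDiagOp A (ContinuousLinearMap.adjoint B) z).snd z.snd = _
    rw [offDiagOp_fst, offDiagOp_snd,
      ContinuousLinearMap.adjoint_inner_left]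
  have hw0 : 0 ≤ numRadius T := Real.iSup_nonneg fun _ => norm_nonneg _
  constructor
  · -- ‖A + B‖ ≤ 2 * numRadius T
    refine ContinuousLinearMap.opNorm_le_bound _ (by linarith) fun y => ?_
    rcases eq_or_ne y 0 with rfl | hy
    · simp
    · have hyn : ‖y‖ ≠ 0 := norm_ne_zero_iff.mpr hy
      set y' : H := (‖y‖ : ℂ)⁻¹ • y with hy'
      have hy'1 : ‖y'‖ = 1 := by
        rw [hy', norm_smul, norm_inv, Complex.norm_real, norm_norm, inv_mul_cancel₀ hyn]
      suffices h : ‖(A + B) y'‖ ≤ 2 * numRadius T by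
        have hyy : (A + B) y = (‖y‖ : ℂ) • (A + B) y' := by
          rw [hy', map_smul, smul_smul, mul_inv_cancel₀ (by exact_mod_cast hyn), one_smul]
        rw [hyy, norm_smul, Complex.norm_real, norm_norm, mul_comm]
        exact mul_le_mul_of_nonneg_right h (norm_nonneg y)
      set u : H := (A + B) y' with hu
      rcases eq_or_ne u 0 with hu0 | hu0
      · rw [hu0]; simpa using by linarith
      have hun : ‖u‖ ≠ 0 := norm_ne_zero_iff.mpr hu0
      set x : H := (‖u‖ : ℂ)⁻¹ • u with hx
      have hx1 : ‖x‖ = 1 := by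
        rw [hx, norm_smul, norm_inv, Complex.norm_real, norm_norm, inv_mul_cancel₀ hun]
      set a : ℂ := inner ℂ (A y') x with ha
      set b : ℂ := inner ℂ (B y') x with hb
      have hab : a + b = (‖u‖ : ℂ) := by
        rw [ha, hb, ← inner_add_left]
        have hsum : (A : H →L[ℂ] H) y' + B y' = u := by rw [hu]; simp
        rw [hsum, hx, inner_smul_right, inner_self_eq_norm_sq_to_K]
        have : (‖u‖ : ℂ) ≠ 0 := by exact_mod_cast hun
        field_simp
        rfl
      have habn : ‖a + b‖ = ‖u‖ := by rw [hab, Complex.norm_real, norm_norm]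
      set θ : ℂ := if b = 0 then 1 else (starRingEnd ℂ) b / ‖b‖ with hθ
      have hθn : ‖θ‖ = 1 := by
        rw [hθ]
        split_ifs with h
        · simp
        · rw [norm_div, RCLike.norm_conj, Complex.norm_real, norm_norm,
            div_self (norm_ne_zero_iff.mpr h)]
      have hθb : θ * b = (‖b‖ : ℂ) := by
        rw [hθ]
        split_ifs with h
        · simp [h]
        · have hbn : (‖b‖ : ℂ) ≠ 0 := by exact_mod_cast norm_ne_zero_iff.mpr h
          rw [div_mul_eq_mul_div, mul_comm, Complex.mul_conj]
          have hb2 : (Complex.normSq b : ℂ) = (‖b‖ : ℂ) ^ 2 := by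
            rw [Complex.normSq_eq_norm_sq]; norm_cast
          rw [hb2, sq, mul_div_assoc, div_self hbn, mul_one]
      have hconj : (starRingEnd ℂ) θ * (starRingEnd ℂ) b = θ * b := by
        rw [← map_mul, hθb, Complex.conj_ofReal]
      -- build the unit vector z
      set c : ℂ := ((Real.sqrt 2 : ℝ) : ℂ)⁻¹ with hc
      have hcn : ‖c‖ = (Real.sqrt 2)⁻¹ := by
        rw [hc, norm_inv, Complex.norm_real, Real.norm_eq_abs,
          abs_of_nonneg (Real.sqrt_nonneg 2)]
      have hcc : (starRingEnd ℂ) c = c := by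
        rw [hc, map_inv₀, Complex.conj_ofReal]
      set z : WithLp 2 (H × H) := (WithLp.equiv 2 (H × H)).symm ((c * θ) • x, c • y') with hz
      have hzf : z.fst = (c * θ) • x := rfl
      have hzs : z.snd = c • y' := rfl
      have hsq : ((Real.sqrt 2)⁻¹) ^ 2 = 2⁻¹ := by
        rw [inv_pow, Real.sq_sqrt (by norm_num : (0:ℝ) ≤ 2)]
      have hz1 : ‖z‖ = 1 := by
        rw [WithLp.prod_norm_eq_of_L2, hzf, hzs, norm_smul (c * θ) x, hx1,
          norm_smul c y', hy'1, norm_mul, hcn, hθn]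
        rw [show ((Real.sqrt 2)⁻¹ * 1 * 1) ^ 2 + ((Real.sqrt 2)⁻¹ * 1) ^ 2
            = ((Real.sqrt 2)⁻¹) ^ 2 + ((Real.sqrt 2)⁻¹) ^ 2 by ring, hsq]
        norm_num
      have hxb : (inner ℂ x (B y') : ℂ) = (starRingEnd ℂ) b := by
        rw [hb, ← inner_conj_symm]
      have e1 : (inner ℂ (T z) z : ℂ) = c ^ 2 * θ * (a + b) := by
        rw [hinner z, hzf, hzs]
        simp only [map_smul, inner_smul_left, inner_smul_right, map_mul, hcc, hxb]
        rw [← ha]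
        linear_combination (c ^ 2) * hconj
      have e2 : ‖(inner ℂ (T z) z : ℂ)‖ = ‖u‖ / 2 := by
        rw [e1, norm_mul, norm_mul, norm_pow, hcn, hθn, habn, hsq]
        ring
      have hle := le_ciSup (numRadius_bdd T) (⟨z, hz1⟩ : {w : WithLp 2 (H × H) // ‖w‖ = 1})
      simp only at hle
      rw [e2] at hle
      have : numRadius T = ⨆ w : {w : WithLp 2 (H × H) // ‖w‖ = 1},
          ‖(inner ℂ (T w.val) w.val : ℂ)‖ := rfl
      rw [← this] at hle
      linarith
  · -- 2 * numRadius T ≤ ‖A‖ + ‖B‖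
    have key : numRadius T ≤ (‖A‖ + ‖B‖) / 2 := by
      refine Real.iSup_le ?_ (by positivity)
      rintro ⟨z, hzn⟩
      have h1 : ‖z.fst‖ ^ 2 + ‖z.snd‖ ^ 2 = 1 := by
        rw [← WithLp.prod_norm_sq_eq_of_L2, hzn, one_pow]
      calc ‖(inner ℂ (T z) z : ℂ)‖
          ≤ ‖(inner ℂ (A z.snd) z.fst : ℂ)‖ + ‖(inner ℂ z.fst (B z.snd) : ℂ)‖ := by
            rw [hinner z]; exact norm_add_le _ _
        _ ≤ ‖A z.snd‖ * ‖z.fst‖ + ‖z.fst‖ * ‖B z.snd‖ :=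
            add_le_add (norm_inner_le_norm _ _) (norm_inner_le_norm _ _)
        _ ≤ (‖A‖ * ‖z.snd‖) * ‖z.fst‖ + ‖z.fst‖ * (‖B‖ * ‖z.snd‖) := by
            gcongr <;> [exact A.le_opNorm _; exact B.le_opNorm _]
        _ ≤ (‖A‖ + ‖B‖) / 2 := by
            nlinarith [norm_nonneg z.fst, norm_nonneg z.snd, norm_nonneg A, norm_nonneg B,
              sq_nonneg (‖z.fst‖ - ‖z.snd‖)]
    linarith
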